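/- For any ξ ∈ ℍⁿ, λ > 0 and β ∈ ℝ, the generalized CR inversion Φ_{ξ,λ}^β is an involution: (Φ_{ξ,λ}^β ∘ Φ_{ξ,λ}^β)(ζ) = ζ for all ζ ∈ ℍⁿ ∖ {ξ}. -/

import Mathlib

open Complex Filter Topology MeasureTheory

noncomputable section

/-- The Heisenberg group ℍⁿ as ℂⁿ × ℝ. -/
abbrev Heis (n : ℕ) := (Fin n → ℂ) × ℝ

namespace Heis

variable {n : ℕ}

/-- Hermitian inner product ⟨z,z'⟩ = Σ_j z_j conj(z'_j). -/
def hermInner (z w : Fin n → ℂ) : ℂ := ∑ j, z j * (starRingEnd ℂ) (w j)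

/-- Squared Euclidean norm |z|² = Σ_j |z_j|². -/
def nsq (z : Fin n → ℂ) : ℝ := ∑ j, Complex.normSq (z j)

/-- Group law (z,t)·(z',t') = (z+z', t+t'+2 Im⟨z,z'⟩). -/
def hmul (a b : Heis n) : Heis n :=
  (a.1 + b.1, a.2 + b.2 + 2 * (hermInner a.1 b.1).im)

/-- Group inverse: ζ⁻¹ = −ζ. -/
def hinv (a : Heis n) : Heis n := (-a.1, -a.2)

/-- Korányi norm |(z,t)|_H = (|z|⁴ + t²)^{1/4}. -/
def korNorm (a : Heis n) : ℝ := ((nsq a.1) ^ 2 + a.2 ^ 2) ^ ((1 : ℝ)/4)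

/-- Korányi distance d_H(ξ,ζ) = |ζ⁻¹·ξ|_H. -/
def dH (a b : Heis n) : ℝ := korNorm (hmul (hinv b) a)

/-- Open Korányi ball B_λ(ξ). -/
def ball (ξ : Heis n) (lam : ℝ) : Set (Heis n) := {ζ | dH ξ ζ < lam}

/-- Left translation τ_ξ. -/
def tau (ξ ζ : Heis n) : Heis n := hmul ξ ζ

/-- Dilation δ_λ(z,t) = (λz, λ²t). -/
def dil (lam : ℝ) (a : Heis n) : Heis n := (fun j => (lam : ℂ) * a.1 j, lam ^ 2 * a.2)

/-- Rotation ρ_M(z,t) = (Mz,t). -/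
def rot (M : Matrix (Fin n) (Fin n) ℂ) (a : Heis n) : Heis n := (M.mulVec a.1, a.2)

/-- Inversion ι(z,t) = (conj z, −t). -/
def iota (a : Heis n) : Heis n := (fun j => (starRingEnd ℂ) (a.1 j), -a.2)

/-- w = t + i|z|². -/
def wC (a : Heis n) : ℂ := (a.2 : ℂ) + Complex.I * ((nsq a.1 : ℝ) : ℂ)

/-- CR inversion 𝒥(z,t) = (z/w, −t/|w|²). -/
def crInv (a : Heis n) : Heis n :=
  (fun j => a.1 j / wC a, -a.2 / Complex.normSq (wC a))

/-- Angles θ_k for the rotation matrix M_{ξ,β}. -/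
def theta (ξ : Heis n) (β : ℝ) (k : Fin n) : ℝ :=
  if ξ.1 k ≠ 0 then 2 * (ξ.1 k).arg + (wC ξ + Complex.I * (β : ℂ)).arg else 0

/-- The unitary diagonal matrix M_{ξ,β} = diag(e^{iθ₁},…,e^{iθₙ}). -/
def Mmat (ξ : Heis n) (β : ℝ) : Matrix (Fin n) (Fin n) ℂ :=
  Matrix.diagonal fun k => Complex.exp (Complex.I * ((theta ξ β k : ℝ) : ℂ))

/-- Generalized CR inversion Φ_{ξ,λ}^β = τ_ξ ∘ ρ_{M_{ξ,β}} ∘ δ_{λ²} ∘ 𝒥 ∘ ι ∘ τ_ξ⁻¹. -/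
def Phi (ξ : Heis n) (lam β : ℝ) (ζ : Heis n) : Heis n :=
  tau ξ (rot (Mmat ξ β) (dil (lam ^ 2) (crInv (iota (hmul (hinv ξ) ζ)))))

/-- Direction of the vector field X_j at p. -/
def XVec (j : Fin n) (p : Heis n) : Heis n := (Pi.single j (1 : ℂ), 2 * (p.1 j).im)

/-- Direction of the vector field Y_j at p. -/
def YVec (j : Fin n) (p : Heis n) : Heis n := (Pi.single j Complex.I, -2 * (p.1 j).re)

/-- The vector field X_j acting on functions. -/
def Xop (j : Fin n) (u : Heis n → ℝ) (p : Heis n) : ℝ := fderiv ℝ u p (XVec j p)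

/-- The vector field Y_j acting on functions. -/
def Yop (j : Fin n) (u : Heis n → ℝ) (p : Heis n) : ℝ := fderiv ℝ u p (YVec j p)

/-- Sub-Laplacian Δ_H = Σ_j (X_j² + Y_j²). -/
def subLap (u : Heis n → ℝ) (p : Heis n) : ℝ :=
  ∑ j, (Xop j (Xop j u) p + Yop j (Yop j u) p)

/-- Squared length of the horizontal gradient |∇_H u|² = Σ_j ((X_j u)² + (Y_j u)²). -/
def gradHSq (u : Heis n → ℝ) (p : Heis n) : ℝ :=
  ∑ j, ((Xop j u p) ^ 2 + (Yop j u p) ^ 2)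

/-- Generalized Kelvin transform u_{ξ,λ}^β(η) = (λ/d_H(η,ξ))^{Q−2} u(Φ_{ξ,λ}^β(η)), Q−2 = 2n. -/
def kelvin (u : Heis n → ℝ) (ξ : Heis n) (lam β : ℝ) (η : Heis n) : ℝ :=
  (lam / dH η ξ) ^ (2 * n) * u (Phi ξ lam β η)

/-- The filter |ζ|_H → ∞ on ℍⁿ. -/
def atInftyH (n : ℕ) : Filter (Heis n) := Filter.comap korNorm Filter.atTop

end Heis

namespace HeisAux
open Heis Complex

variable {n : ℕ}

lemma hermInner_self_im (z : Fin n → ℂ) : (hermInner z z).im = 0 := by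
  simp [hermInner, Complex.mul_conj, Complex.im_sum]

lemma tau_inv_tau (ξ a : Heis n) : hmul (hinv ξ) (hmul ξ a) = a := by
  refine Prod.ext (by simp [hmul, hinv]) ?_
  simp [hmul, hinv, hermInner, mul_add, Finset.sum_add_distrib, Complex.im_sum,
    Complex.mul_conj]
  ring

lemma tau_tau_inv (ξ a : Heis n) : hmul ξ (hmul (hinv ξ) a) = a := by
  refine Prod.ext (by simp [hmul, hinv]) ?_
  simp [hmul, hinv, hermInner, mul_add, Finset.sum_add_distrib, Complex.im_sum,
    Complex.mul_conj]
  ring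

lemma nsq_eq_zero {z : Fin n → ℂ} (h : nsq z = 0) : z = 0 := by
  funext j
  have := (Finset.sum_eq_zero_iff_of_nonneg
    (fun i _ => Complex.normSq_nonneg (z i))).1 h j (Finset.mem_univ j)
  simpa [Complex.normSq_eq_zero] using this

lemma wC_iota (c : Heis n) :
    wC (iota c) = ((-c.2 : ℝ) : ℂ) + Complex.I * ((nsq c.1 : ℝ) : ℂ) := by
  simp [wC, iota, nsq, Complex.normSq_conj]

lemma crInv_iota (c : Heis n) :
    crInv (iota c) =
      (fun j => (starRingEnd ℂ) (c.1 j) /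
          (((-c.2 : ℝ) : ℂ) + Complex.I * ((nsq c.1 : ℝ) : ℂ)),
        c.2 / Complex.normSq (((-c.2 : ℝ) : ℂ) + Complex.I * ((nsq c.1 : ℝ) : ℂ))) := by
  have h : wC ((fun j => (starRingEnd ℂ) (c.1 j), -c.2) : Heis n) =
      ((-c.2 : ℝ) : ℂ) + Complex.I * ((nsq c.1 : ℝ) : ℂ) := by
    simp [wC, nsq, Complex.normSq_conj]
  refine Prod.ext ?_ ?_
  · funext j
    simp only [crInv, iota, h]
  · simp only [crInv, iota, h, neg_neg]

lemma F_invol (M : Fin n → ℂ) (hM : ∀ k, M k * (starRingEnd ℂ) (M k) = 1)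
    (lam : ℝ) (hlam : lam ≠ 0) (a : Heis n) (ha : a ≠ 0) :
    rot (Matrix.diagonal M) (dil (lam ^ 2) (crInv (iota
      (rot (Matrix.diagonal M) (dil (lam ^ 2) (crInv (iota a))))))) = a := by
  obtain ⟨z, t⟩ := a
  set s := nsq z with hs
  have hD : t ^ 2 + s ^ 2 ≠ 0 := by
    intro h
    have ht : t = 0 := by nlinarith [sq_nonneg t, sq_nonneg s]
    have hs0 : s = 0 := by nlinarith [sq_nonneg t, sq_nonneg s]
    exact ha (by simp [Prod.ext_iff, ht, nsq_eq_zero (hs.symm.trans hs0)])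
  set L := lam ^ 2 with hL
  have hLne : L ≠ 0 := pow_ne_zero _ hlam
  -- middle point, explicitly
  have hns : ∀ x y : ℝ, Complex.normSq (((x : ℝ) : ℂ) + Complex.I * ((y : ℝ) : ℂ))
      = x ^ 2 + y ^ 2 := by
    intro x y
    simp [Complex.normSq_apply]
    ring
  have hb : rot (Matrix.diagonal M) (dil L (crInv (iota (z, t)))) =
      (fun j => M j * (((L : ℝ) : ℂ) * ((starRingEnd ℂ) (z j) /
          (((-t : ℝ) : ℂ) + Complex.I * ((s : ℝ) : ℂ)))),
        L ^ 2 * (t / (t ^ 2 + s ^ 2))) := by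
    rw [crInv_iota]
    refine Prod.ext ?_ ?_
    · funext j
      simp only [rot, dil, Matrix.mulVec_diagonal, ← hs]
    · simp only [rot, dil, ← hs, hns (-t) s]
      ring_nf
  rw [crInv_iota, hb]
  have hnb1 : nsq (fun j => M j * (((L : ℝ) : ℂ) * ((starRingEnd ℂ) (z j) /
      (((-t : ℝ) : ℂ) + Complex.I * ((s : ℝ) : ℂ))))) = L ^ 2 * s / (t ^ 2 + s ^ 2) := by
    have hMn : ∀ k, Complex.normSq (M k) = 1 := by
      intro k
      have := congrArg Complex.re (hM k)
      simpa [Complex.mul_conj] using this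
    simp only [nsq, Complex.normSq_mul, Complex.normSq_div, Complex.normSq_conj,
      Complex.normSq_ofReal, hMn, one_mul, hns (-t) s]
    rw [← Finset.mul_sum, ← Finset.sum_div]
    have hsum : (∑ i, Complex.normSq (z i)) = s := hs.symm
    rw [hsum]
    ring
  simp only [hnb1]
  refine Prod.ext ?_ ?_
  · funext j
    simp only [rot, dil, Matrix.mulVec_diagonal]
    simp only [map_mul, map_div₀, map_add, map_neg, Complex.conj_conj,
      Complex.conj_ofReal, Complex.conj_I]
    push_cast
    have htsC : ((t : ℂ) ^ 2 + (s : ℂ) ^ 2) ≠ 0 := by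
      intro h
      apply hD
      exact_mod_cast h
    have hfact : (-(t : ℂ) + Complex.I * s) * (-(t : ℂ) - Complex.I * s)
        = (t : ℂ) ^ 2 + (s : ℂ) ^ 2 := by
      linear_combination (-(s : ℂ) ^ 2) * Complex.I_sq
    have hW1ne : (-(t : ℂ) + Complex.I * s) ≠ 0 :=
      left_ne_zero_of_mul (hfact ▸ htsC)
    have hW1cne : (-(t : ℂ) - Complex.I * s) ≠ 0 :=
      right_ne_zero_of_mul (hfact ▸ htsC)
    have hLC : ((L : ℝ) : ℂ) ≠ 0 := by exact_mod_cast hLne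
    field_simp
    have h2 : (-(↑L ^ 2 * (t : ℂ) * ((t : ℂ) ^ 2 + (s : ℂ) ^ 2))
        + Complex.I * (↑L ^ 2 * (s : ℂ)) * ((t : ℂ) ^ 2 + (s : ℂ) ^ 2)) ≠ 0 := by
      have this1 : (-(↑L ^ 2 * (t : ℂ) * ((t : ℂ) ^ 2 + (s : ℂ) ^ 2))
          + Complex.I * (↑L ^ 2 * (s : ℂ)) * ((t : ℂ) ^ 2 + (s : ℂ) ^ 2))
          = ((L : ℂ)) ^ 2 * ((t : ℂ) ^ 2 + (s : ℂ) ^ 2) * (-(t : ℂ) + Complex.I * s) := by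
        ring
      rw [this1]
      exact mul_ne_zero (mul_ne_zero (pow_ne_zero 2 hLC) htsC) hW1ne
    have hW1cne' : (-(t : ℂ) + -(Complex.I * s)) ≠ 0 := by
      simpa [sub_eq_add_neg] using hW1cne
    rw [div_eq_iff hW1cne']
    linear_combination (z j * ((t : ℂ) ^ 2 + (s : ℂ) ^ 2)) * hM j
      + (z j * (s : ℂ) ^ 2) * Complex.I_sq
  · simp only [rot, dil]
    have e : (-(L ^ 2 * (t / (t ^ 2 + s ^ 2)))) ^ 2 + (L ^ 2 * s / (t ^ 2 + s ^ 2)) ^ 2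
        = (L ^ 2) ^ 2 / (t ^ 2 + s ^ 2) := by
      field_simp
    rw [hns (-(L ^ 2 * (t / (t ^ 2 + s ^ 2)))) (L ^ 2 * s / (t ^ 2 + s ^ 2)), e]
    field_simp
end HeisAux

open Heis
/-- the generalized CR inversion Φ_{ξ,λ}^β is an involution. -/
theorem phi_involution (n : ℕ) (ξ : Heis n) (lam : ℝ) (hlam : 0 < lam) (β : ℝ) :
    ∀ ζ : Heis n, ζ ≠ ξ → Phi ξ lam β (Phi ξ lam β ζ) = ζ := by
  intro ζ hζ
  have hη : hmul (hinv ξ) ζ ≠ 0 := by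
    intro h
    apply hζ
    have h1 := HeisAux.tau_tau_inv ξ ζ
    rw [h] at h1
    have h0 : hmul ξ (0 : Heis n) = ξ := by
      simp [hmul, hermInner]
    rw [h0] at h1
    exact h1.symm
  have hMc : ∀ k, (fun k => Complex.exp (Complex.I * ((theta ξ β k : ℝ) : ℂ))) k *
      (starRingEnd ℂ) ((fun k => Complex.exp (Complex.I * ((theta ξ β k : ℝ) : ℂ))) k) = 1 := by
    intro k
    simp only [← Complex.exp_conj, map_mul, Complex.conj_I, Complex.conj_ofReal]
    rw [← Complex.exp_add]
    ring_nf
    exact Complex.exp_zero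
  simp only [Phi, tau]
  rw [HeisAux.tau_inv_tau]
  rw [show Mmat ξ β = Matrix.diagonal
      (fun k => Complex.exp (Complex.I * ((theta ξ β k : ℝ) : ℂ))) from rfl]
  rw [HeisAux.F_invol _ hMc lam hlam.ne' _ hη]
  exact HeisAux.tau_tau_inv ξ ζ
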